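/- Entireness from a twisted functional equation with identity constant term: let T be a Tate algebra over C_∞ (complete non-archimedean), Φ′ = Σ_{i=0}^{m} b′_i t^i with b′_i ∈ Mat_d(T) and b′_0 = Id_d, and Ψ′ = Σ_{n≥0} g′_n t^n ∈ Mat_{d×1}(T{t/θ}) with ‖g′_n‖ → 0 satisfying Ψ′^{(−1)} = Φ′·Ψ′. Then for every real C > 1, sup_n C^n·‖g′_n‖ < ∞; i.e., the entries of Ψ′ are entire functions of t (infinite radius of convergence). -/
import Mathlib

open Filter

/-- The sup norm of a matrix over a normed ring. -/
noncomputable def matNorm {m k : Type*} {T : Type*} [NormedCommRing T]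
    (M : Matrix m k T) : ℝ := ⨆ p : m × k, ‖M p.1 p.2‖

/-- The sup norm of a vector over a normed ring. -/
noncomputable def vecNorm {m : Type*} {T : Type*} [NormedCommRing T]
    (v : m → T) : ℝ := ⨆ i, ‖v i‖

private lemma vecNorm_nonneg' {m : Type*} {T : Type*} [NormedCommRing T]
    (v : m → T) : 0 ≤ vecNorm v := Real.iSup_nonneg fun _ => norm_nonneg _

private lemma matNorm_nonneg' {m k : Type*} {T : Type*} [NormedCommRing T]
    (M : Matrix m k T) : 0 ≤ matNorm M := Real.iSup_nonneg fun _ => norm_nonneg _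

private lemma norm_le_vecNorm {m : Type*} [Finite m] {T : Type*} [NormedCommRing T]
    (v : m → T) (i : m) : ‖v i‖ ≤ vecNorm v := by
  have h := le_ciSup (Set.finite_range fun i => ‖v i‖).bddAbove i
  simpa [vecNorm] using h

private lemma norm_le_matNorm {m k : Type*} [Finite m] [Finite k] {T : Type*} [NormedCommRing T]
    (M : Matrix m k T) (i : m) (j : k) : ‖M i j‖ ≤ matNorm M := by
  have h := le_ciSup (Set.finite_range fun p : m × k => ‖M p.1 p.2‖).bddAbove (i, j)
  simpa [matNorm] using h

private lemma vecNorm_le' {m : Type*} {T : Type*} [NormedCommRing T]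
    (v : m → T) {c : ℝ} (hc : 0 ≤ c) (h : ∀ i, ‖v i‖ ≤ c) : vecNorm v ≤ c :=
  Real.iSup_le h hc

/-- Nonarchimedean bound for a finite sum. -/
private lemma nonarch_sum_le {T : Type*} [NormedCommRing T]
    (hna : IsNonarchimedean (‖·‖ : T → ℝ)) {ι : Type*} (s : Finset ι) (f : ι → T)
    {c : ℝ} (hc : 0 ≤ c) (h : ∀ i ∈ s, ‖f i‖ ≤ c) : ‖∑ i ∈ s, f i‖ ≤ c := by
  classical
  induction s using Finset.induction with
  | empty => simpa using hc
  | @insert a s hx ih =>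
    rw [Finset.sum_insert hx]
    refine le_trans (hna _ _) (max_le (h a (Finset.mem_insert_self a s)) ?_)
    exact ih fun i hi => h i (Finset.mem_insert_of_mem hi)

private lemma mulVec_norm_le {d : ℕ} {T : Type*} [NormedCommRing T]
    (hna : IsNonarchimedean (‖·‖ : T → ℝ))
    (hmul : ∀ x y : T, ‖x * y‖ = ‖x‖ * ‖y‖)
    (M : Matrix (Fin d) (Fin d) T) (v : Fin d → T) (j : Fin d) :
    ‖M.mulVec v j‖ ≤ matNorm M * vecNorm v := by
  have hc : (0:ℝ) ≤ matNorm M * vecNorm v :=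
    mul_nonneg (matNorm_nonneg' M) (vecNorm_nonneg' v)
  have hdef : M.mulVec v j = ∑ k, M j k * v k := rfl
  rw [hdef]
  refine nonarch_sum_le hna Finset.univ _ hc fun k _ => ?_
  rw [hmul]
  exact mul_le_mul (norm_le_matNorm M j k) (norm_le_vecNorm v k) (norm_nonneg _)
    (matNorm_nonneg' M)

/-- Key scalar lemma: if `0 ≤ x < 1` and `x ^ (q⁻¹) ≤ max x S`, then `x ≤ S ^ q`. -/
private lemma key_scalar {x S : ℝ} {q : ℕ} (hq : 1 < q) (hx0 : 0 ≤ x) (hx1 : x < 1)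
    (hS : 0 ≤ S) (h : x ^ ((q : ℝ))⁻¹ ≤ max x S) : x ≤ S ^ q := by
  rcases le_max_iff.1 h with h1 | h2
  · -- x^(1/q) ≤ x forces x = 0
    rcases eq_or_lt_of_le hx0 with h0 | h0
    · rw [← h0]; positivity
    · exfalso
      have hlt : x ^ (1:ℝ) < x ^ ((q:ℝ))⁻¹ := by
        apply Real.rpow_lt_rpow_of_exponent_gt h0 hx1
        rw [inv_lt_one_iff₀]
        right
        exact_mod_cast hq
      rw [Real.rpow_one] at hlt
      linarith
  · calc x = (x ^ ((q:ℝ))⁻¹) ^ q := (Real.rpow_inv_natCast_pow hx0 (by omega)).symm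
      _ ≤ S ^ q := pow_le_pow_left₀ (Real.rpow_nonneg hx0 _) h2 q

/-- Entireness from a twisted functional equation with identity constant term:
if `Φ′ = Σ_{i=0}^m b′_i t^i` with `b′_0 = Id` and `Ψ′ = Σ_n g′_n t^n` (with
`‖g′_n‖ → 0`) satisfies `Ψ′^{(−1)} = Φ′·Ψ′`, i.e. coefficient-wise
`σ(g′_n) − g′_n = Σ_{i=1}^{min(n,m)} b′_i·g′_{n−i}`, then for every `C > 1` the
sequence `C^n·‖g′_n‖` is bounded: the entries of `Ψ′` are entire in `t`. -/
theorem entire_from_twisted_equation {T : Type*} [NormedCommRing T] [CompleteSpace T]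
    (hna : IsNonarchimedean (‖·‖ : T → ℝ))
    (hmul : ∀ x y : T, ‖x * y‖ = ‖x‖ * ‖y‖)
    (q : ℕ) (hq : 1 < q)
    (σ : T →+* T) (hσ : ∀ x : T, ‖σ x‖ = ‖x‖ ^ ((q : ℝ))⁻¹)
    (hfix : ∀ x : T, σ x = x → ‖x‖ < 1 → x = 0)
    (d m : ℕ) (b : ℕ → Matrix (Fin d) (Fin d) T) (hb0 : b 0 = 1)
    (g : ℕ → (Fin d → T))
    (hdecay : Tendsto (fun n => vecNorm (g n)) atTop (nhds 0))
    (hfe : ∀ n, ((fun j => σ (g n j)) - g n)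
      = ∑ i ∈ Finset.Icc 1 (min n m), (b i).mulVec (g (n - i))) :
    ∀ C : ℝ, 1 < C → BddAbove (Set.range fun n => C ^ n * vecNorm (g n)) := by
  intro C hC
  have hC0 : (0:ℝ) < C := lt_trans one_pos hC
  set r : ℝ := C⁻¹ with hr
  have hr0 : 0 < r := inv_pos.2 hC0
  have hr1 : r < 1 := inv_lt_one_of_one_lt₀ hC
  -- the constant B bounding the matrices
  set B : ℝ := 1 + ∑ i ∈ Finset.Icc 1 m, matNorm (b i) with hB
  have hB1 : (1:ℝ) ≤ B := by
    have : (0:ℝ) ≤ ∑ i ∈ Finset.Icc 1 m, matNorm (b i) :=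
      Finset.sum_nonneg fun i _ => matNorm_nonneg' _
    simp only [hB]; linarith
  have hB0 : (0:ℝ) < B := lt_of_lt_of_le one_pos hB1
  have hBle : ∀ i ∈ Finset.Icc 1 m, matNorm (b i) ≤ B := by
    intro i hi
    have h1 := Finset.single_le_sum (f := fun i => matNorm (b i))
      (fun i _ => matNorm_nonneg' (b i)) hi
    simp only [hB]; linarith
  -- choose δ
  set δ : ℝ := min (1/2) (r ^ (m * q) / B ^ q) with hδ
  have hδ0 : 0 < δ := lt_min (by norm_num) (by positivity)
  have hδ1 : δ < 1 := lt_of_le_of_lt (min_le_left _ _) (by norm_num)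
  have hδkey : B ^ q * δ ^ q ≤ δ * r ^ (m * q) := by
    have h2q : δ ^ q ≤ δ ^ 2 := pow_le_pow_of_le_one hδ0.le hδ1.le hq
    have hδ2 : δ ≤ r ^ (m * q) / B ^ q := min_le_right _ _
    calc B ^ q * δ ^ q ≤ B ^ q * δ ^ 2 := by
          apply mul_le_mul_of_nonneg_left h2q (by positivity)
      _ = δ * (B ^ q * δ) := by ring
      _ ≤ δ * (B ^ q * (r ^ (m * q) / B ^ q)) := by
          apply mul_le_mul_of_nonneg_left _ hδ0.le
          exact mul_le_mul_of_nonneg_left hδ2 (by positivity)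
      _ = δ * r ^ (m * q) := by field_simp
  -- choose N with vecNorm (g n) ≤ δ for n ≥ N
  obtain ⟨N, hN0⟩ := (hdecay.eventually_lt_const hδ0).exists_forall_of_atTop
  have hN : ∀ n, N ≤ n → vecNorm (g n) ≤ δ := fun n hn => (hN0 n hn).le
  -- main inductive bound
  have main : ∀ n, N ≤ n → vecNorm (g n) ≤ δ * r ^ (n - (N + m)) := by
    intro n
    induction n using Nat.strong_induction_on with
    | _ n IH =>
      intro hn
      by_cases hnm : n < N + m
      · have h0 : n - (N + m) = 0 := Nat.sub_eq_zero_of_le hnm.le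
        rw [h0, pow_zero, mul_one]
        exact hN n hn
      · push_neg at hnm
        set e : ℕ := n - (N + m) with he
        -- bound on the RHS entries
        set S : ℝ := B * (δ * r ^ (e - m)) with hS
        have hS0 : (0:ℝ) ≤ S := by positivity
        have hRHS : ∀ j, ‖(∑ i ∈ Finset.Icc 1 (min n m), (b i).mulVec (g (n - i))) j‖ ≤ S := by
          intro j
          rw [Finset.sum_apply]
          refine nonarch_sum_le hna _ _ hS0 fun i hi => ?_
          have himem := Finset.mem_Icc.1 hi
          have hi1 : 1 ≤ i := himem.1
          have him : i ≤ m := le_trans himem.2 (min_le_right _ _)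
          have hniN : N ≤ n - i := by omega
          have hlt : n - i < n := by omega
          have hIH : vecNorm (g (n - i)) ≤ δ * r ^ ((n - i) - (N + m)) := IH _ hlt hniN
          have hexp : e - m ≤ (n - i) - (N + m) := by omega
          have hpow : r ^ ((n - i) - (N + m)) ≤ r ^ (e - m) :=
            pow_le_pow_of_le_one hr0.le hr1.le hexp
          calc ‖(b i).mulVec (g (n - i)) j‖ ≤ matNorm (b i) * vecNorm (g (n - i)) :=
                mulVec_norm_le hna hmul _ _ _
            _ ≤ B * (δ * r ^ (e - m)) :=
                mul_le_mul (hBle i (Finset.mem_Icc.2 ⟨hi1, him⟩))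
                  (le_trans hIH (mul_le_mul_of_nonneg_left hpow hδ0.le))
                  (vecNorm_nonneg' _) hB0.le
        -- each entry satisfies x ≤ S^q
        have hentry : ∀ j, ‖g n j‖ ≤ S ^ q := by
          intro j
          have hx1 : ‖g n j‖ < 1 :=
            lt_of_le_of_lt (le_trans (norm_le_vecNorm _ j) (hN n hn)) hδ1
          apply key_scalar hq (norm_nonneg _) hx1 hS0
          have hsub : σ (g n j) - g n j
              = (∑ i ∈ Finset.Icc 1 (min n m), (b i).mulVec (g (n - i))) j := by
            have h3 := congrFun (hfe n) j
            simpa using h3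
          have heq : σ (g n j)
              = g n j + (∑ i ∈ Finset.Icc 1 (min n m), (b i).mulVec (g (n - i))) j := by
            rw [← hsub]; ring
          calc ‖g n j‖ ^ ((q:ℝ))⁻¹ = ‖σ (g n j)‖ := (hσ _).symm
            _ ≤ max ‖g n j‖ ‖(∑ i ∈ Finset.Icc 1 (min n m), (b i).mulVec (g (n - i))) j‖ := by
                rw [heq]; exact hna _ _
            _ ≤ max ‖g n j‖ S := max_le_max le_rfl (hRHS j)
        have hvec : vecNorm (g n) ≤ S ^ q := vecNorm_le' _ (by positivity) hentry
        -- show S^q ≤ δ * r^e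
        have hSq : S ^ q ≤ δ * r ^ e := by
          have hexp2 : e ≤ m * q + (e - m) * q := by
            rcases le_or_gt m e with hme | hme
            · have : m * q + (e - m) * q = e * q := by
                rw [← Nat.add_mul, Nat.add_sub_cancel' hme]
              rw [this]
              exact Nat.le_mul_of_pos_right e (by omega)
            · have h1 : (e - m) = 0 := Nat.sub_eq_zero_of_le hme.le
              have h2 : m ≤ m * q := Nat.le_mul_of_pos_right m (by omega)
              omega
          calc S ^ q = B ^ q * (δ ^ q * (r ^ (e - m)) ^ q) := by rw [hS, mul_pow, mul_pow]
            _ = B ^ q * δ ^ q * r ^ ((e - m) * q) := by rw [← pow_mul]; ring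
            _ ≤ δ * r ^ (m * q) * r ^ ((e - m) * q) :=
                mul_le_mul_of_nonneg_right hδkey (by positivity)
            _ = δ * r ^ (m * q + (e - m) * q) := by rw [pow_add]; ring
            _ ≤ δ * r ^ e := by
                apply mul_le_mul_of_nonneg_left _ hδ0.le
                exact pow_le_pow_of_le_one hr0.le hr1.le hexp2
        exact le_trans hvec hSq
  -- conclude boundedness
  set K1 : ℝ := δ * C ^ (N + m) with hK1
  refine ⟨max K1 (∑ k ∈ Finset.range N, C ^ k * vecNorm (g k)), ?_⟩
  rintro x ⟨n, rfl⟩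
  simp only
  rcases le_or_gt N n with hn | hn
  · refine le_trans ?_ (le_max_left _ _)
    have h1 : C ^ n * vecNorm (g n) ≤ C ^ n * (δ * r ^ (n - (N + m))) :=
      mul_le_mul_of_nonneg_left (main n hn) (by positivity)
    have h2 : C ^ n ≤ C ^ (N + m) * C ^ (n - (N + m)) := by
      rw [← pow_add]
      exact pow_le_pow_right₀ hC.le (by omega)
    have h3 : C ^ (n - (N + m)) * r ^ (n - (N + m)) = 1 := by
      rw [← mul_pow, mul_inv_cancel₀ hC0.ne', one_pow]
    calc C ^ n * vecNorm (g n) ≤ C ^ n * (δ * r ^ (n - (N + m))) := h1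
      _ ≤ (C ^ (N + m) * C ^ (n - (N + m))) * (δ * r ^ (n - (N + m))) := by
          apply mul_le_mul_of_nonneg_right h2 (by positivity)
      _ = δ * C ^ (N + m) * (C ^ (n - (N + m)) * r ^ (n - (N + m))) := by ring
      _ = K1 := by rw [h3, mul_one]
  · refine le_trans ?_ (le_max_right _ _)
    exact Finset.single_le_sum (f := fun k => C ^ k * vecNorm (g k))
      (fun k _ => mul_nonneg (by positivity) (vecNorm_nonneg' _))
      (Finset.mem_range.2 hn)
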